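/- Let R = ℂ⟦X,Y⟧ be the formal power series ring in two variables over ℂ. If l, n ∈ R both have zero constant coefficient and l·n = X·(X² + Y³), then the quotient ℂ-vector space R / Ideal.span {l, n} has dimension 3. -/

import Mathlib

open MvPowerSeries Finsupp

noncomputable def sliceH (s : Fin 2) : MvPowerSeries (Fin 2) ℂ →+* PowerSeries ℂ where
  toFun f := PowerSeries.mk fun j => MvPowerSeries.coeff (Finsupp.single s j) f
  map_one' := by
    ext j
    simp [MvPowerSeries.coeff_one, PowerSeries.coeff_one, Finsupp.single_eq_zero]
  map_mul' f g := by
    ext j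
    rw [PowerSeries.coeff_mul]
    simp only [PowerSeries.coeff_mk, MvPowerSeries.coeff_mul, Finsupp.antidiagonal_single,
      Finset.sum_map, Function.Embedding.coe_prodMap, Function.Embedding.coeFn_mk,
      Prod.map_fst, Prod.map_snd]
  map_zero' := by ext j; simp
  map_add' f g := by ext j; simp

lemma coeff_sliceH (s : Fin 2) (f : MvPowerSeries (Fin 2) ℂ) (j : ℕ) :
    PowerSeries.coeff j (sliceH s f) = MvPowerSeries.coeff (Finsupp.single s j) f := by
  simp [sliceH]

lemma sliceH_X_self (s : Fin 2) : sliceH s (X s) = PowerSeries.X := by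
  ext j
  rw [coeff_sliceH]
  simp [MvPowerSeries.coeff_X, PowerSeries.coeff_X, (Finsupp.single_injective s).eq_iff]

lemma sliceH_X_ne (s t : Fin 2) (h : s ≠ t) : sliceH s (X t) = 0 := by
  ext j
  rw [coeff_sliceH]
  simp only [MvPowerSeries.coeff_X, map_zero]
  rw [if_neg]
  intro hEq
  have := DFunLike.congr_fun hEq t
  simp [Finsupp.single_apply, h] at this

lemma constantCoeff_sliceH (s : Fin 2) (f : MvPowerSeries (Fin 2) ℂ) :
    PowerSeries.constantCoeff (sliceH s f) = constantCoeff f := by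
  have := coeff_sliceH s f 0
  simpa [Finsupp.single_zero] using this

-- every Fin 2 finsupp decomposes
lemma fin2_decomp (m : Fin 2 →₀ ℕ) :
    m = Finsupp.single 0 (m 0) + Finsupp.single 1 (m 1) := by
  ext i
  fin_cases i <;> simp [Finsupp.single_apply]

lemma X_dvd_iff_sliceH (s t : Fin 2) (h : s ≠ t) (f : MvPowerSeries (Fin 2) ℂ) :
    (X s : MvPowerSeries (Fin 2) ℂ) ∣ f ↔ sliceH t f = 0 := by
  rw [MvPowerSeries.X_dvd_iff]
  constructor
  · intro H
    ext j
    rw [coeff_sliceH, map_zero]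
    apply H
    rw [Finsupp.single_apply, if_neg (Ne.symm h)]
  · intro H m hm
    have hmt : m = Finsupp.single t (m t) := by
      ext i
      have hi : i = s ∨ i = t := by fin_cases i <;> fin_cases s <;> fin_cases t <;> simp_all
      rcases hi with rfl | rfl
      · rw [Finsupp.single_eq_of_ne' (Ne.symm h), hm]
      · rw [Finsupp.single_eq_same]
    have := congrArg (PowerSeries.coeff (m t)) H
    rw [coeff_sliceH, map_zero] at this
    rw [hmt]
    exact this

local notation "e0" => Finsupp.single (0 : Fin 2) 1
local notation "e1" => Finsupp.single (1 : Fin 2) 1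

lemma antidiag11 :
    Finset.HasAntidiagonal.antidiagonal (e0 + e1) =
      {((0 : Fin 2 →₀ ℕ), e0 + e1), (e0, e1), (e1, e0), (e0 + e1, 0)} := by
  ext ⟨s, t⟩
  simp only [Finset.HasAntidiagonal.mem_antidiagonal, Finset.mem_insert, Finset.mem_singleton, Prod.mk.injEq]
  constructor
  · intro hst
    have h0 : s 0 + t 0 = 1 := by
      have := DFunLike.congr_fun hst 0
      simpa [Finsupp.single_apply] using this
    have h1 : s 1 + t 1 = 1 := by
      have := DFunLike.congr_fun hst 1
      simpa [Finsupp.single_apply] using this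
    have hs := fin2_decomp s
    have ht := fin2_decomp t
    have c0 : (s 0 = 0 ∧ t 0 = 1) ∨ (s 0 = 1 ∧ t 0 = 0) := by omega
    have c1 : (s 1 = 0 ∧ t 1 = 1) ∨ (s 1 = 1 ∧ t 1 = 0) := by omega
    rcases c0 with ⟨hs0, ht0⟩ | ⟨hs0, ht0⟩ <;> rcases c1 with ⟨hs1, ht1⟩ | ⟨hs1, ht1⟩ <;>
      rw [hs0, hs1] at hs <;> rw [ht0, ht1] at ht <;>
      simp only [Finsupp.single_zero, zero_add, add_zero] at hs ht
    · exact Or.inl ⟨hs, ht⟩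
    · exact Or.inr (Or.inr (Or.inl ⟨hs, ht⟩))
    · exact Or.inr (Or.inl ⟨hs, ht⟩)
    · exact Or.inr (Or.inr (Or.inr ⟨hs, ht⟩))
  · rintro (⟨rfl, rfl⟩ | ⟨rfl, rfl⟩ | ⟨rfl, rfl⟩ | ⟨rfl, rfl⟩) <;>
      simp [add_comm]

-- distinctness helpers
lemma ne_e0_e1 : (e0 : Fin 2 →₀ ℕ) ≠ e1 := fun h => by simpa using DFunLike.congr_fun h 0
lemma ne_z_e01 : (0 : Fin 2 →₀ ℕ) ≠ e0 + e1 := fun h => by simpa using DFunLike.congr_fun h 0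
lemma ne_e0_e01 : (e0 : Fin 2 →₀ ℕ) ≠ e0 + e1 := fun h => by simpa using DFunLike.congr_fun h 1
lemma ne_e1_e01 : (e1 : Fin 2 →₀ ℕ) ≠ e0 + e1 := fun h => by simpa using DFunLike.congr_fun h 0
lemma ne_z_e0 : (0 : Fin 2 →₀ ℕ) ≠ e0 := fun h => by simpa using DFunLike.congr_fun h 0
lemma ne_z_e1 : (0 : Fin 2 →₀ ℕ) ≠ e1 := fun h => by simpa using DFunLike.congr_fun h 1

lemma coeff11_mul (u n : MvPowerSeries (Fin 2) ℂ) :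
    MvPowerSeries.coeff (e0 + e1) (u * n) =
      MvPowerSeries.coeff 0 u * MvPowerSeries.coeff (e0 + e1) n
      + MvPowerSeries.coeff e0 u * MvPowerSeries.coeff e1 n
      + MvPowerSeries.coeff e1 u * MvPowerSeries.coeff e0 n
      + MvPowerSeries.coeff (e0 + e1) u * MvPowerSeries.coeff 0 n := by
  classical
  rw [MvPowerSeries.coeff_mul, antidiag11]
  rw [Finset.sum_insert (by
      simp only [Finset.mem_insert, Finset.mem_singleton, Prod.mk.injEq, not_or]
      exact ⟨fun h => ne_z_e0 h.1, fun h => ne_z_e1 h.1, fun h => ne_z_e01 h.1⟩),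
    Finset.sum_insert (by
      simp only [Finset.mem_insert, Finset.mem_singleton, Prod.mk.injEq, not_or]
      exact ⟨fun h => ne_e0_e1 h.1, fun h => ne_e0_e01 h.1⟩),
    Finset.sum_insert (by
      simp only [Finset.mem_singleton, Prod.mk.injEq, not_and]
      exact fun h => absurd h ne_e1_e01),
    Finset.sum_singleton]
  ring

noncomputable instance : IsDomain (MvPowerSeries (Fin 2) ℂ) := NoZeroDivisors.to_isDomain _

lemma key_not_unit (u n : MvPowerSeries (Fin 2) ℂ)
    (hu : constantCoeff u = 0) (hn : constantCoeff n = 0) :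
    u * n ≠ X 0 ^ 2 + X 1 ^ 3 := by
  intro h
  have h0 : sliceH 0 u * sliceH 0 n = PowerSeries.X ^ 2 := by
    have := congrArg (sliceH 0) h
    rw [map_mul, map_add, map_pow, map_pow, sliceH_X_self, sliceH_X_ne 0 1 (by decide)] at this
    simpa using this
  have h1 : sliceH 1 u * sliceH 1 n = PowerSeries.X ^ 3 := by
    have := congrArg (sliceH 1) h
    rw [map_mul, map_add, map_pow, map_pow, sliceH_X_ne 1 0 (by decide),
      sliceH_X_self] at this
    simpa using this
  -- slice 0 analysis
  obtain ⟨u0, hu0⟩ : (PowerSeries.X : PowerSeries ℂ) ∣ sliceH 0 u :=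
    PowerSeries.X_dvd_iff.mpr (by rw [constantCoeff_sliceH]; exact hu)
  obtain ⟨n0, hn0⟩ : (PowerSeries.X : PowerSeries ℂ) ∣ sliceH 0 n :=
    PowerSeries.X_dvd_iff.mpr (by rw [constantCoeff_sliceH]; exact hn)
  have hX2 : (PowerSeries.X : PowerSeries ℂ) ^ 2 ≠ 0 :=
    pow_ne_zero _ PowerSeries.X_ne_zero
  have h0' : u0 * n0 = 1 := by
    apply mul_left_cancel₀ hX2
    rw [mul_one]
    calc PowerSeries.X ^ 2 * (u0 * n0) = (PowerSeries.X * u0) * (PowerSeries.X * n0) := by ring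
    _ = PowerSeries.X ^ 2 := by rw [← hu0, ← hn0, h0]
  -- slice 1 analysis
  obtain ⟨u1, hu1⟩ : (PowerSeries.X : PowerSeries ℂ) ∣ sliceH 1 u :=
    PowerSeries.X_dvd_iff.mpr (by rw [constantCoeff_sliceH]; exact hu)
  obtain ⟨n1, hn1⟩ : (PowerSeries.X : PowerSeries ℂ) ∣ sliceH 1 n :=
    PowerSeries.X_dvd_iff.mpr (by rw [constantCoeff_sliceH]; exact hn)
  have h1' : u1 * n1 = PowerSeries.X := by
    apply mul_left_cancel₀ hX2
    calc PowerSeries.X ^ 2 * (u1 * n1) = (PowerSeries.X * u1) * (PowerSeries.X * n1) := by ring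
    _ = PowerSeries.X ^ 3 := by rw [← hu1, ← hn1, h1]
    _ = PowerSeries.X ^ 2 * PowerSeries.X := by ring
  -- the four first-order coefficients
  set a := MvPowerSeries.coeff e0 u with ha_def
  set c := MvPowerSeries.coeff e0 n with hc_def
  set b := MvPowerSeries.coeff e1 u with hb_def
  set d := MvPowerSeries.coeff e1 n with hd_def
  have hau : a = PowerSeries.constantCoeff u0 := by
    rw [ha_def, ← coeff_sliceH, hu0, ← PowerSeries.coeff_zero_eq_constantCoeff,
      PowerSeries.coeff_succ_X_mul]
  have hcn : c = PowerSeries.constantCoeff n0 := by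
    rw [hc_def, ← coeff_sliceH, hn0, ← PowerSeries.coeff_zero_eq_constantCoeff,
      PowerSeries.coeff_succ_X_mul]
  have hbu : b = PowerSeries.constantCoeff u1 := by
    rw [hb_def, ← coeff_sliceH, hu1, ← PowerSeries.coeff_zero_eq_constantCoeff,
      PowerSeries.coeff_succ_X_mul]
  have hdn : d = PowerSeries.constantCoeff n1 := by
    rw [hd_def, ← coeff_sliceH, hn1, ← PowerSeries.coeff_zero_eq_constantCoeff,
      PowerSeries.coeff_succ_X_mul]
  have hac : a * c = 1 := by
    rw [hau, hcn, ← map_mul, h0', map_one]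
  have hbd : b * d = 0 := by
    rw [hbu, hdn, ← map_mul, h1', PowerSeries.constantCoeff_X]
  -- coefficient at (1,1)
  have h11 : a * d + b * c = 0 := by
    have := congrArg (MvPowerSeries.coeff (e0 + e1)) h
    rw [coeff11_mul, map_add] at this
    simp only [MvPowerSeries.coeff_zero_eq_constantCoeff, hu, hn, zero_mul, mul_zero,
      add_zero, zero_add] at this
    rw [MvPowerSeries.coeff_X_pow, MvPowerSeries.coeff_X_pow, if_neg, if_neg] at this
    · rw [← ha_def, ← hb_def, ← hc_def, ← hd_def] at this
      linear_combination this
    · intro hEq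
      have := DFunLike.congr_fun hEq 0
      simp [Finsupp.single_apply] at this
    · intro hEq
      have := DFunLike.congr_fun hEq 1
      simp [Finsupp.single_apply] at this
  have ha : a ≠ 0 := left_ne_zero_of_mul_eq_one hac
  have hc : c ≠ 0 := right_ne_zero_of_mul_eq_one hac
  have hb0 : b = 0 ∧ d = 0 := by
    rcases mul_eq_zero.mp hbd with hb | hd
    · refine ⟨hb, ?_⟩
      rw [hb, zero_mul, add_zero] at h11
      exact (mul_eq_zero.mp h11).resolve_left ha
    · refine ⟨?_, hd⟩
      rw [hd, mul_zero, zero_add] at h11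
      exact (mul_eq_zero.mp h11).resolve_right hc
  -- contradiction with coeff 1 of u1 * n1 = X
  have hco : PowerSeries.coeff 1 (u1 * n1) = 1 := by
    rw [h1', PowerSeries.coeff_one_X]
  rw [PowerSeries.coeff_mul] at hco
  simp [Finset.Nat.antidiagonal_succ, PowerSeries.coeff_zero_eq_constantCoeff,
    ← hbu, ← hdn, hb0.1, hb0.2] at hco

lemma X0_ne_zero : (X 0 : MvPowerSeries (Fin 2) ℂ) ≠ 0 := by
  intro h
  have := congrArg (MvPowerSeries.coeff e0) h
  simp [MvPowerSeries.coeff_X] at this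

lemma prime_X0 : Prime (X 0 : MvPowerSeries (Fin 2) ℂ) := by
  refine ⟨X0_ne_zero, ?_, ?_⟩
  · rw [MvPowerSeries.isUnit_iff_constantCoeff]
    simp
  · intro f g hfg
    rw [X_dvd_iff_sliceH 0 1 (by decide)] at hfg ⊢
    rw [X_dvd_iff_sliceH 0 1 (by decide)]
    rw [map_mul] at hfg
    exact mul_eq_zero.mp hfg

lemma span_helper (l n u : MvPowerSeries (Fin 2) ℂ)
    (hn : constantCoeff n = 0)
    (hd : l = X 0 * u) (hun : u * n = X 0 ^ 2 + X 1 ^ 3) :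
    Ideal.span {l, n} = Ideal.span {X 0, (X 1) ^ 3} := by
  have hu : IsUnit u := by
    rw [MvPowerSeries.isUnit_iff_constantCoeff, isUnit_iff_ne_zero]
    intro h0
    exact key_not_unit u n h0 hn hun
  obtain ⟨w, hw⟩ := hu.exists_left_inv
  apply le_antisymm
  · refine Ideal.span_le.mpr (Set.insert_subset_iff.mpr ⟨?_, Set.singleton_subset_iff.mpr ?_⟩)
    · exact Ideal.mem_span_pair.mpr ⟨u, 0, by linear_combination -hd⟩
    · exact Ideal.mem_span_pair.mpr ⟨w * X 0, w, by linear_combination n * hw - w * hun⟩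
  · refine Ideal.span_le.mpr (Set.insert_subset_iff.mpr ⟨?_, Set.singleton_subset_iff.mpr ?_⟩)
    · exact Ideal.mem_span_pair.mpr ⟨w, 0, by linear_combination w * hd + X 0 * hw⟩
    · exact Ideal.mem_span_pair.mpr ⟨-(w ^ 2 * l), u, by
        linear_combination hun - (w * l + X 0) * w * hd - (w * l + X 0) * (X 0) * hw⟩

lemma span_eq (l n : MvPowerSeries (Fin 2) ℂ)
    (hl : constantCoeff l = 0)
    (hn : constantCoeff n = 0)
    (hln : l * n = X 0 * ((X 0) ^ 2 + (X 1) ^ 3)) :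
    Ideal.span {l, n} = Ideal.span {X 0, (X 1) ^ 3} := by
  have hdvd : (X 0 : MvPowerSeries (Fin 2) ℂ) ∣ l * n := ⟨_, hln⟩
  rcases prime_X0.2.2 l n hdvd with ⟨u, hd⟩ | ⟨u, hd⟩
  · apply span_helper l n u hn hd
    apply mul_left_cancel₀ X0_ne_zero
    rw [← mul_assoc, ← hd, hln]
  · rw [Ideal.span_pair_comm]
    apply span_helper n l u hl hd
    apply mul_left_cancel₀ X0_ne_zero
    rw [← mul_assoc, ← hd, mul_comm n l, hln]

lemma fin2_single1 (m : Fin 2 →₀ ℕ) (hm : m 0 = 0) : m = Finsupp.single 1 (m 1) := by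
  ext i
  have hi : i = 0 ∨ i = 1 := by fin_cases i <;> simp
  rcases hi with rfl | rfl
  · rw [Finsupp.single_eq_of_ne' (by decide), hm]
  · rw [Finsupp.single_eq_same]

noncomputable def TL : (Fin 3 → ℂ) →ₗ[ℂ] MvPowerSeries (Fin 2) ℂ where
  toFun c := c 0 • 1 + c 1 • X 1 + c 2 • X 1 ^ 2
  map_add' x y := by simp only [Pi.add_apply, add_smul]; abel
  map_smul' r x := by
    simp only [Pi.smul_apply, smul_eq_mul, RingHom.id_apply, smul_add, mul_smul]

lemma coeff_TL (c : Fin 3 → ℂ) (j : ℕ) :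
    MvPowerSeries.coeff (Finsupp.single 1 j) (TL c) =
      if j = 0 then c 0 else if j = 1 then c 1 else if j = 2 then c 2 else 0 := by
  simp only [TL, LinearMap.coe_mk, AddHom.coe_mk, map_add, map_smul, smul_eq_mul,
    MvPowerSeries.coeff_one, MvPowerSeries.coeff_X, MvPowerSeries.coeff_X_pow,
    Finsupp.single_eq_zero, (Finsupp.single_injective (1 : Fin 2)).eq_iff]
  split_ifs <;> subst_vars <;> simp_all

lemma mem_XY3 (ψ : MvPowerSeries (Fin 2) ℂ)
    (h : ∀ j < 3, MvPowerSeries.coeff (Finsupp.single 1 j) ψ = 0) :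
    ψ ∈ Ideal.span {(X 0 : MvPowerSeries (Fin 2) ℂ), (X 1) ^ 3} := by
  classical
  set ψ₁ : MvPowerSeries (Fin 2) ℂ := fun m => if m 0 = 0 then 0 else ψ m with hψ₁
  set ψ₂ : MvPowerSeries (Fin 2) ℂ := fun m => if m 0 = 0 then ψ m else 0 with hψ₂
  have hsum : ψ = ψ₁ + ψ₂ := by
    ext m
    rw [map_add, MvPowerSeries.coeff_apply, MvPowerSeries.coeff_apply,
      MvPowerSeries.coeff_apply, hψ₁, hψ₂]
    by_cases h0 : m 0 = 0 <;> simp [h0]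
  obtain ⟨q₁, hq₁⟩ : (X 0 : MvPowerSeries (Fin 2) ℂ) ∣ ψ₁ := by
    rw [MvPowerSeries.X_dvd_iff]
    intro m hm
    show (if m 0 = 0 then 0 else ψ m) = 0
    rw [if_pos hm]
  obtain ⟨q₂, hq₂⟩ : (X 1 : MvPowerSeries (Fin 2) ℂ) ^ 3 ∣ ψ₂ := by
    rw [MvPowerSeries.X_pow_dvd_iff]
    intro m hm
    show (if m 0 = 0 then ψ m else 0) = 0
    by_cases h0 : m 0 = 0
    · rw [if_pos h0]
      have := h (m 1) hm
      rw [MvPowerSeries.coeff_apply] at this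
      conv_lhs => rw [fin2_single1 m h0]
      exact this
    · rw [if_neg h0]
  rw [hsum, hq₁, hq₂]
  exact Ideal.add_mem _ (Ideal.mem_span_pair.mpr ⟨q₁, 0, by ring⟩)
    (Ideal.mem_span_pair.mpr ⟨0, q₂, by ring⟩)

lemma finrank_XY3 :
    Module.finrank ℂ (MvPowerSeries (Fin 2) ℂ ⧸
      Ideal.span {(X 0 : MvPowerSeries (Fin 2) ℂ), (X 1) ^ 3}) = 3 := by
  classical
  set I : Ideal (MvPowerSeries (Fin 2) ℂ) := Ideal.span {X 0, (X 1) ^ 3} with hI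
  let f : (Fin 3 → ℂ) →ₗ[ℂ] (MvPowerSeries (Fin 2) ℂ ⧸ I) :=
    (Ideal.Quotient.mkₐ ℂ I).toLinearMap.comp TL
  have hcoeff_zero : ∀ (z : MvPowerSeries (Fin 2) ℂ), z ∈ I →
      ∀ j < 3, MvPowerSeries.coeff (Finsupp.single 1 j) z = 0 := by
    intro z hz j hj
    obtain ⟨A, B, hAB⟩ := Ideal.mem_span_pair.mp hz
    rw [← hAB, map_add]
    have h1 : MvPowerSeries.coeff (Finsupp.single 1 j) (A * X 0) = 0 :=
      MvPowerSeries.X_dvd_iff.mp (dvd_mul_left _ _) _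
        (by rw [Finsupp.single_eq_of_ne' (by decide)])
    have h2 : MvPowerSeries.coeff (Finsupp.single 1 j) (B * (X 1) ^ 3) = 0 :=
      MvPowerSeries.X_pow_dvd_iff.mp (dvd_mul_left _ _) _
        (by rw [Finsupp.single_eq_same]; exact hj)
    rw [h1, h2, add_zero]
  have hinj : Function.Injective f := by
    rw [injective_iff_map_eq_zero]
    intro c hc
    have hmem : TL c ∈ I := by
      rwa [LinearMap.comp_apply, AlgHom.toLinearMap_apply, Ideal.Quotient.mkₐ_eq_mk,
        Ideal.Quotient.eq_zero_iff_mem] at hc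
    have h0 := hcoeff_zero _ hmem 0 (by norm_num)
    have h1 := hcoeff_zero _ hmem 1 (by norm_num)
    have h2 := hcoeff_zero _ hmem 2 (by norm_num)
    rw [coeff_TL] at h0 h1 h2
    norm_num at h0 h1 h2
    funext i
    fin_cases i <;> simpa using by first | exact h0 | exact h1 | exact h2
  have hsurj : Function.Surjective f := by
    intro x
    obtain ⟨φ, rfl⟩ := Ideal.Quotient.mk_surjective x
    refine ⟨fun i => MvPowerSeries.coeff (Finsupp.single 1 (i : ℕ)) φ, ?_⟩
    rw [LinearMap.comp_apply, AlgHom.toLinearMap_apply, Ideal.Quotient.mkₐ_eq_mk,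
      Ideal.Quotient.eq]
    apply mem_XY3
    intro j hj
    rw [map_sub, coeff_TL]
    interval_cases j <;> norm_num
  have equiv := LinearEquiv.ofBijective f ⟨hinj, hsurj⟩
  rw [← equiv.finrank_eq]
  simp

/-- Theorem 3.14(2), case `E₇`: if `l·n = X·(X² + Y³)` in `ℂ⟦X,Y⟧`
with `l, n` vanishing at the origin, then `dim_ℂ ℂ⟦X,Y⟧/⟨l,n⟩ = 3`. -/
theorem stmt7 (l n : MvPowerSeries (Fin 2) ℂ)
    (hl : constantCoeff l = 0)
    (hn : constantCoeff n = 0)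
    (hln : l * n = X 0 * ((X 0) ^ 2 + (X 1) ^ 3)) :
    Module.finrank ℂ (MvPowerSeries (Fin 2) ℂ ⧸ Ideal.span {l, n}) = 3 := by
  rw [span_eq l n hl hn hln]
  exact finrank_XY3
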